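/- arXiv:2304.12948 — 2 statements merged into one kernel-verified Lean document; each statement's English description precedes it below -/
import Mathlib

section
/- Let G be a finite rooted DAG with root r. Then for every vertex v of G, the weight of v is at most the multiplicity of v, i.e. wt_G(v) ≤ mul_G(v). -/
/-- The set of directed paths from `r` to `v` in the digraph with edge relation `E`,
represented as nonempty vertex lists. -/
def pathsFromTo {V : Type} (E : V → V → Prop) (r v : V) : Set (List V) :=
  {p : List V | p.Chain' E ∧ p.head? = some r ∧ p.getLast? = some v}

/-- The weight `wt_G(v)`: the number of directed paths from the root `r` to `v`. -/
noncomputable def pathWt {V : Type} (E : V → V → Prop) (r v : V) : ℕ :=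
  Set.ncard (pathsFromTo E r v)

/-- The in-degree of `w`. -/
noncomputable def degIn {V : Type} (E : V → V → Prop) (w : V) : ℕ :=
  Set.ncard {u | E u w}

/-- The multiplicity `mul_G(v)`: the maximum, over all paths `(v_0, …, v_k)` from the
root `r` to `v`, of the product `∏_{i=1}^k deg⁻(v_i)` (the empty product being `1`). -/
noncomputable def pathMul {V : Type} (E : V → V → Prop) (r v : V) : ℕ :=
  sSup {m | ∃ p ∈ pathsFromTo E r v, m = (p.tail.map (degIn E)).prod}

open Relation

section Aux

variable {V : Type} {E : V → V → Prop} {r : V}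

lemma aux_pairwise_transGen {p : List V} (hp : p.Chain' E) :
    p.Pairwise (TransGen E) := by
  haveI : IsTrans V (TransGen E) := ⟨fun _ _ _ => TransGen.trans⟩
  exact List.isChain_iff_pairwise.mp (hp.imp fun _ _ h => TransGen.single h)

lemma aux_nodup (hacyc : ∀ x : V, ¬ TransGen E x x) {p : List V}
    (hp : p.Chain' E) : p.Nodup := by
  refine (aux_pairwise_transGen hp).imp ?_
  intro a b h heq
  subst heq
  exact hacyc a h

lemma aux_finite_paths [Fintype V] (hacyc : ∀ x : V, ¬ TransGen E x x) (v : V) :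
    (pathsFromTo E r v).Finite := by
  apply Set.Finite.subset (List.finite_length_le V (Fintype.card V))
  intro p hp
  exact (aux_nodup hacyc hp.1).length_le_card

lemma aux_concat_mem {p : List V} {u v : V} (hp : p ∈ pathsFromTo E r u) (he : E u v) :
    p ++ [v] ∈ pathsFromTo E r v := by
  obtain ⟨hc, hh, hl⟩ := hp
  have hpne : p ≠ [] := by rintro rfl; simp at hh
  refine ⟨?_, ?_, List.getLast?_concat⟩
  · rw [show List.Chain' E (p ++ [v]) ↔ _ from List.isChain_append]
    refine ⟨hc, List.isChain_singleton v, ?_⟩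
    intro x hx y hy
    simp only [List.head?_cons, Option.mem_def, Option.some.injEq] at hy
    rw [hl] at hx
    simp only [Option.mem_def, Option.some.injEq] at hx
    subst hx; subst hy; exact he
  · cases p with
    | nil => exact absurd rfl hpne
    | cons a t => simpa using hh

/-- The set whose sup is `pathMul` is the image of the finite path set. -/
lemma aux_mulSet_eq (v : V) :
    {m | ∃ p ∈ pathsFromTo E r v, m = (p.tail.map (degIn E)).prod}
      = (fun p => (p.tail.map (degIn E)).prod) '' pathsFromTo E r v := by
  ext m
  simp only [Set.mem_setOf_eq, Set.mem_image]
  exact ⟨fun ⟨p, hp, h⟩ => ⟨p, hp, h.symm⟩, fun ⟨p, hp, h⟩ => ⟨p, hp, h.symm⟩⟩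

lemma aux_le_pathMul [Fintype V] (hacyc : ∀ x : V, ¬ TransGen E x x) {v : V}
    {p : List V} (hp : p ∈ pathsFromTo E r v) :
    (p.tail.map (degIn E)).prod ≤ pathMul E r v := by
  apply le_csSup
  · rw [aux_mulSet_eq]
    exact ((aux_finite_paths hacyc v).image _).bddAbove
  · exact ⟨p, hp, rfl⟩

lemma aux_exists_path (hroot : ReflTransGen E r v) :
    (pathsFromTo E r v).Nonempty := by
  induction hroot with
  | refl => exact ⟨[r], List.isChain_singleton r, rfl, rfl⟩
  | tail _ he ih =>
    obtain ⟨p, hp⟩ := ih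
    exact ⟨p ++ [_], aux_concat_mem hp he⟩

/-- Decomposition of a path to `v ≠ r`. -/
lemma aux_decomp {v : V} (hvr : v ≠ r) {p : List V} (hp : p ∈ pathsFromTo E r v) :
    ∃ u q, E u v ∧ q ∈ pathsFromTo E r u ∧ p = q ++ [v] := by
  obtain ⟨hc, hh, hl⟩ := hp
  obtain ⟨q, rfl⟩ := List.getLast?_eq_some_iff.mp hl
  have hqne : q ≠ [] := by
    rintro rfl
    simp only [List.nil_append, List.head?_cons, Option.some.injEq] at hh
    exact hvr hh

  rw [show List.Chain' E (q ++ [v]) ↔ _ from List.isChain_append] at hc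
  obtain ⟨hcq, -, hrel⟩ := hc
  obtain ⟨u, hu⟩ : ∃ u, q.getLast? = some u := by
    cases hq : q.getLast? with
    | none => exact absurd (List.getLast?_eq_none_iff.mp hq) hqne
    | some u => exact ⟨u, rfl⟩
  refine ⟨u, q, hrel u (by rw [hu]; rfl) v rfl, ⟨hcq, ?_, hu⟩, rfl⟩
  rwa [List.head?_append_of_ne_nil _ hqne] at hh

end Aux

/-- In a finite rooted DAG `G` with root `r`, for every vertex `v` of `G`,
`wt_G(v) ≤ mul_G(v)`. -/
theorem stmt0 {V : Type} [Fintype V] (E : V → V → Prop) (r : V)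
    (hacyc : ∀ x : V, ¬ Relation.TransGen E x x)
    (hroot : ∀ x : V, Relation.ReflTransGen E r x)
    (v : V) : pathWt E r v ≤ pathMul E r v := by
  classical
  haveI : IsTrans V (TransGen E) := ⟨fun _ _ _ => TransGen.trans⟩
  haveI : IsIrrefl V (TransGen E) := ⟨hacyc⟩
  refine WellFounded.induction (C := fun v => pathWt E r v ≤ pathMul E r v)
    (Finite.wellFounded_of_trans_of_irrefl (TransGen E)) v ?_
  clear v
  intro v ih
  by_cases hvr : v = r
  · rw [hvr]
    -- weight is at most 1 and multiplicity is at least 1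
    have h1 : pathWt E r r ≤ 1 := by
      have hsub : pathsFromTo E r r ⊆ {[r]} := by
        rintro p ⟨hc, hh, hl⟩
        cases p with
        | nil => simp at hh
        | cons a t =>
          simp only [List.head?_cons, Option.some.injEq] at hh
          subst hh
          cases t with
          | nil => rfl
          | cons b s =>
            exfalso
            have hnd := aux_nodup hacyc hc
            rw [List.getLast?_cons_cons] at hl
            exact (List.nodup_cons.mp hnd).1 (List.mem_of_getLast? hl)
      calc pathWt E r r ≤ ({[r]} : Set (List V)).ncard :=
            Set.ncard_le_ncard hsub (Set.finite_singleton _)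
        _ = 1 := Set.ncard_singleton _
    have h2 : 1 ≤ pathMul E r r := by
      have := aux_le_pathMul (r := r) hacyc
        (p := [r]) ⟨List.isChain_singleton r, rfl, rfl⟩
      simpa using this
    exact h1.trans h2
  · -- v ≠ r : decompose paths via in-neighbours
    set N : Finset V := (Set.toFinite {u | E u v}).toFinset with hN
    have hmemN : ∀ u, u ∈ N ↔ E u v := by
      intro u; simp [hN, Set.Finite.mem_toFinset]
    have hdeg : degIn E v = N.card := by
      rw [degIn, ← Set.ncard_coe_finset]
      congr 1
      ext u; simp [hmemN]
    -- path finsets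
    have hfin : ∀ u : V, (pathsFromTo E r u).Finite := aux_finite_paths hacyc
    set P : V → Finset (List V) := fun u => (hfin u).toFinset with hP
    -- weight bound : wt v ≤ ∑ u ∈ N, wt u
    have hwt : pathWt E r v ≤ ∑ u ∈ N, pathWt E r u := by
      have hsub : pathsFromTo E r v ⊆
          ↑(N.biUnion fun u => (P u).image (· ++ [v])) := by
        intro p hp
        obtain ⟨u, q, he, hq, rfl⟩ := aux_decomp hvr hp
        simp only [Finset.coe_biUnion, Set.mem_iUnion, Finset.mem_coe,
          Finset.mem_image]
        exact ⟨u, (hmemN u).mpr he, q, (hfin u).mem_toFinset.mpr hq, rfl⟩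
      calc pathWt E r v
          ≤ (↑(N.biUnion fun u => (P u).image (· ++ [v])) : Set (List V)).ncard :=
            Set.ncard_le_ncard hsub (Set.toFinite _)
        _ = (N.biUnion fun u => (P u).image (· ++ [v])).card :=
            Set.ncard_coe_finset _
        _ ≤ ∑ u ∈ N, ((P u).image (· ++ [v])).card := Finset.card_biUnion_le
        _ ≤ ∑ u ∈ N, (P u).card :=
            Finset.sum_le_sum fun u _ => Finset.card_image_le
        _ = ∑ u ∈ N, pathWt E r u := by
            refine Finset.sum_congr rfl fun u _ => ?_
            rw [pathWt, Set.ncard_eq_toFinset_card _ (hfin u)]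
    -- N is nonempty
    have hNne : N.Nonempty := by
      obtain ⟨p, hp⟩ := aux_exists_path (hroot v)
      obtain ⟨u, q, he, -, -⟩ := aux_decomp hvr hp
      exact ⟨u, (hmemN u).mpr he⟩
    -- pick a maximizer of pathMul on N
    obtain ⟨u₀, hu₀N, hu₀max⟩ := N.exists_max_image (pathMul E r) hNne
    have hsum : ∑ u ∈ N, pathWt E r u ≤ N.card * pathMul E r u₀ := by
      calc ∑ u ∈ N, pathWt E r u ≤ ∑ u ∈ N, pathMul E r u :=
            Finset.sum_le_sum fun u hu => ih u (TransGen.single ((hmemN u).mp hu))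
        _ ≤ N.card • pathMul E r u₀ :=
            Finset.sum_le_card_nsmul _ _ _ fun u hu => hu₀max u hu
        _ = N.card * pathMul E r u₀ := by simp
    -- pathMul u₀ is attained by some path
    have hattain : ∃ p ∈ pathsFromTo E r u₀,
        pathMul E r u₀ = (p.tail.map (degIn E)).prod := by
      have hne : (pathsFromTo E r u₀).Nonempty := aux_exists_path (hroot u₀)
      have hmemS : pathMul E r u₀ ∈
          {m | ∃ p ∈ pathsFromTo E r u₀, m = (p.tail.map (degIn E)).prod} := by
        apply Set.Nonempty.csSup_mem
        · obtain ⟨p, hp⟩ := hne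
          exact ⟨_, p, hp, rfl⟩
        · rw [aux_mulSet_eq]
          exact (hfin u₀).image _
      exact hmemS
    obtain ⟨p, hp, hpeq⟩ := hattain
    -- extend p by v
    have hpv : p ++ [v] ∈ pathsFromTo E r v :=
      aux_concat_mem hp ((hmemN u₀).mp hu₀N)
    have hpne : p ≠ [] := by
      rintro rfl; exact absurd hp.2.1 (by simp)
    have hprod : ((p ++ [v]).tail.map (degIn E)).prod
        = pathMul E r u₀ * degIn E v := by
      rw [List.tail_append_of_ne_nil hpne, List.map_append, List.prod_append, hpeq]
      simp
    have hfinal : N.card * pathMul E r u₀ ≤ pathMul E r v := by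
      have := aux_le_pathMul hacyc hpv
      rw [hprod, hdeg] at this
      rwa [mul_comm] at this
    exact hwt.trans (hsum.trans hfinal)
end

section
/- Let G be a finite rooted DAG with root r, and let m ∈ ℕ. If G has the m-path property, then awt(G) ≤ amul(G) ≤ m · |V(G)|. -/
/-- The aggregate weight `awt(G) = Σ_{v ∈ V(G)} wt_G(v)`. -/
noncomputable def awt {V : Type} [Fintype V] (E : V → V → Prop) (r : V) : ℕ :=
  ∑ v : V, pathWt E r v

/-- The aggregate multiplicity `amul(G) = Σ_{v ∈ V(G)} mul_G(v)`. -/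
noncomputable def amul {V : Type} [Fintype V] (E : V → V → Prop) (r : V) : ℕ :=
  ∑ v : V, pathMul E r v

set_option linter.unusedSectionVars false

section Aux
variable {V : Type} {E : V → V → Prop} {r : V}

variable {V : Type} {E : V → V → Prop} {r : V}

lemma pft_ne_nil {p : List V} {v : V} (hp : p ∈ pathsFromTo E r v) : p ≠ [] := by
  rintro rfl; simp [pathsFromTo] at hp

lemma chain'_nodup (hacyc : ∀ x : V, ¬ Relation.TransGen E x x)
    {p : List V} (hp : p.Chain' E) : p.Nodup := by
  have h1 : p.Chain' (Relation.TransGen E) :=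
    List.IsChain.imp (fun a b h => Relation.TransGen.single h) hp
  have h2 : p.Pairwise (Relation.TransGen E) := List.isChain_iff_pairwise.mp h1
  exact h2.imp (fun h => by rintro rfl; exact hacyc _ h)

lemma pft_finite [Fintype V] (hacyc : ∀ x : V, ¬ Relation.TransGen E x x) (v : V) :
    (pathsFromTo E r v).Finite := by
  apply (List.finite_length_le V (Fintype.card V)).subset
  intro p hp
  exact (chain'_nodup hacyc hp.1).length_le_card

lemma append_mem {p : List V} {u v : V} (hp : p ∈ pathsFromTo E r u) (huv : E u v) :
    p ++ [v] ∈ pathsFromTo E r v := by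
  obtain ⟨hc, hh, hl⟩ := hp
  refine ⟨?_, ?_, ?_⟩
  · rw [List.Chain', List.isChain_append]
    refine ⟨hc, List.isChain_singleton _, fun x hx y hy => ?_⟩
    rw [hl] at hx
    simp at hx hy
    subst hx; subst hy; exact huv
  · cases p with
    | nil => simp at hh
    | cons a t => simpa using hh
  · simp [List.getLast?_concat]

lemma exists_path {v : V} (h : Relation.ReflTransGen E r v) :
    ∃ p, p ∈ pathsFromTo E r v := by
  induction h with
  | refl => exact ⟨[r], by simp [pathsFromTo, List.Chain', List.isChain_singleton]⟩
  | tail _ huv ih =>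
    obtain ⟨p, hp⟩ := ih
    exact ⟨_, append_mem hp huv⟩





variable [Fintype V] (hacyc : ∀ x : V, ¬ Relation.TransGen E x x)
  (hroot : ∀ x : V, Relation.ReflTransGen E r x)

def mulSet (E : V → V → Prop) (r v : V) : Set ℕ :=
  {m | ∃ p ∈ pathsFromTo E r v, m = (p.tail.map (degIn E)).prod}

include hacyc in
lemma mulSet_bdd (v : V) : BddAbove (mulSet E r v) := by
  have : mulSet E r v = (fun p => (p.tail.map (degIn E)).prod) '' pathsFromTo E r v := by
    ext n; constructor
    · rintro ⟨p, hp, rfl⟩; exact ⟨p, hp, rfl⟩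
    · rintro ⟨p, hp, rfl⟩; exact ⟨p, hp, rfl⟩
  rw [this]
  exact ((pft_finite hacyc v).image _).bddAbove

include hacyc hroot in
lemma mul_mem (v : V) : pathMul E r v ∈ mulSet E r v :=
  Nat.sSup_mem (by obtain ⟨p, hp⟩ := exists_path (hroot v); exact ⟨_, p, hp, rfl⟩)
    (mulSet_bdd hacyc v)

include hacyc in
lemma prod_le_mul {v : V} {p : List V} (hp : p ∈ pathsFromTo E r v) :
    (p.tail.map (degIn E)).prod ≤ pathMul E r v :=
  le_csSup (mulSet_bdd hacyc v) ⟨p, hp, rfl⟩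

include hacyc hroot in
lemma mul_deg_le {u v : V} (huv : E u v) :
    pathMul E r u * degIn E v ≤ pathMul E r v := by
  obtain ⟨p, hp, hprod⟩ := mul_mem hacyc hroot u
  have h2 := append_mem hp huv
  have h3 : ((p ++ [v]).tail.map (degIn E)).prod = pathMul E r u * degIn E v := by
    cases p with
    | nil => exact absurd rfl (pft_ne_nil hp)
    | cons a t => simp [hprod]
  rw [← h3]
  exact prod_le_mul hacyc h2

include hacyc in
lemma one_le_mul_r : 1 ≤ pathMul E r r := by
  have h1 : ([r] : List V) ∈ pathsFromTo E r r := by simp [pathsFromTo, List.Chain', List.isChain_singleton]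
  have := prod_le_mul hacyc h1
  simpa using this

include hacyc in
lemma wt_r_le_one : pathWt E r r ≤ 1 := by
  have hsub : pathsFromTo E r r ⊆ {[r]} := by
    intro p hp
    obtain ⟨hc, hh, hl⟩ := hp
    cases p with
    | nil => simp at hh
    | cons a t =>
      simp only [List.head?_cons, Option.some.injEq] at hh
      cases t with
      | nil => simp [Set.mem_singleton_iff, hh]
      | cons b s =>
        exfalso
        have hnd := chain'_nodup hacyc hc
        obtain ⟨hne, heq⟩ := List.mem_getLast?_eq_getLast (show r ∈ (a :: b :: s).getLast? from hl)
        have hgl : (a :: b :: s).getLast hne = (b :: s).getLast (List.cons_ne_nil _ _) :=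
          List.getLast_cons _
        have hmem : r ∈ b :: s := by
          rw [heq, hgl]; exact List.getLast_mem _
        rw [← hh] at hmem
        exact (List.nodup_cons.mp hnd).1 hmem
  calc pathWt E r r ≤ Set.ncard {[r]} := Set.ncard_le_ncard hsub (Set.finite_singleton _)
    _ = 1 := Set.ncard_singleton _






open Classical in
noncomputable def predsF (E : V → V → Prop) [Fintype V] (v : V) : Finset V :=
  {u : V | E u v}.toFinset

open Classical in
lemma degIn_eq (v : V) : degIn E v = (predsF E v).card := by
  rw [degIn, predsF, Set.ncard_eq_toFinset_card']

include hacyc in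
open Classical in
lemma wt_le_sum {v : V} (hv : v ≠ r) :
    pathWt E r v ≤ ∑ u ∈ predsF E v, pathWt E r u := by
  classical
  have hfin := fun w => pft_finite (r := r) hacyc w
  -- pathsFromTo E r v as a Finset
  have hsub : (hfin v).toFinset ⊆
      (predsF E v).biUnion (fun u => ((hfin u).toFinset).image (· ++ [v])) := by
    intro p hp
    rw [Set.Finite.mem_toFinset] at hp
    obtain ⟨hc, hh, hl⟩ := hp
    have hpne : p ≠ [] := by rintro rfl; simp at hh
    have hlast : p.getLast hpne = v := by
      obtain ⟨h, heq⟩ := List.mem_getLast?_eq_getLast (show v ∈ p.getLast? from hl)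
      exact heq.symm
    have hsplit : p.dropLast ++ [v] = p := by
      rw [← hlast]; exact List.dropLast_append_getLast hpne
    have hqne : p.dropLast ≠ [] := by
      intro h
      rw [h] at hsplit
      rw [← hsplit] at hh
      simp at hh
      exact hv hh
    -- q := p.dropLast, u := q.getLast
    set q := p.dropLast with hq
    have hchain : q.Chain' E ∧ E (q.getLast hqne) v := by
      rw [← hsplit] at hc
      rw [List.Chain', List.isChain_append] at hc
      refine ⟨hc.1, ?_⟩
      apply hc.2.2
      · exact List.getLast?_eq_getLast_of_ne_nil hqne
      · rfl
    have hqmem : q ∈ pathsFromTo E r (q.getLast hqne) := by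
      refine ⟨hchain.1, ?_, List.getLast?_eq_getLast_of_ne_nil hqne⟩
      rw [← hsplit, List.head?_append_of_ne_nil _ hqne] at hh
      exact hh
    rw [Finset.mem_biUnion]
    refine ⟨q.getLast hqne, ?_, ?_⟩
    · rw [predsF, Set.mem_toFinset]; exact hchain.2
    · rw [Finset.mem_image]
      exact ⟨q, (Set.Finite.mem_toFinset _).mpr hqmem, hsplit⟩
  calc pathWt E r v = (hfin v).toFinset.card := Set.ncard_eq_toFinset_card _ (hfin v)
    _ ≤ ((predsF E v).biUnion (fun u => ((hfin u).toFinset).image (· ++ [v]))).card :=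
        Finset.card_le_card hsub
    _ ≤ ∑ u ∈ predsF E v, (((hfin u).toFinset).image (· ++ [v])).card :=
        Finset.card_biUnion_le
    _ ≤ ∑ u ∈ predsF E v, ((hfin u).toFinset).card :=
        Finset.sum_le_sum fun u _ => Finset.card_image_le
    _ = ∑ u ∈ predsF E v, pathWt E r u := by
        refine Finset.sum_congr rfl fun u _ => ?_
        exact (Set.ncard_eq_toFinset_card _ (hfin u)).symm

include hacyc hroot in
lemma wt_le_mul (v : V) : pathWt E r v ≤ pathMul E r v := by
  classical
  have hirr : IsIrrefl V (Relation.TransGen E) := ⟨hacyc⟩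
  have hwf : WellFounded E :=
    Subrelation.wf (fun {x y} h => Relation.TransGen.single h)
      (Finite.wellFounded_of_trans_of_irrefl (Relation.TransGen E))
  induction v using hwf.induction with
  | _ v ih =>
    by_cases hv : v = r
    · subst hv
      exact (wt_r_le_one hacyc).trans (one_le_mul_r hacyc)
    · -- preds nonempty
      have hne : (predsF E v).Nonempty := by
        rcases (hroot v).cases_tail with h | ⟨u, _, huv⟩
        · exact absurd h hv
        · exact ⟨u, by rw [predsF, Set.mem_toFinset]; exact huv⟩
      obtain ⟨u0, hu0, hmax⟩ := Finset.exists_max_image (predsF E v) (pathMul E r) hne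
      have hu0v : E u0 v := by rwa [predsF, Set.mem_toFinset] at hu0
      calc pathWt E r v ≤ ∑ u ∈ predsF E v, pathWt E r u := wt_le_sum hacyc hv
        _ ≤ ∑ u ∈ predsF E v, pathMul E r u := by
            refine Finset.sum_le_sum fun u hu => ?_
            exact ih u (by rwa [predsF, Set.mem_toFinset] at hu)
        _ ≤ ∑ _u ∈ predsF E v, pathMul E r u0 :=
            Finset.sum_le_sum fun u hu => hmax u hu
        _ = (predsF E v).card * pathMul E r u0 := by
            rw [Finset.sum_const, smul_eq_mul]
        _ = pathMul E r u0 * degIn E v := by rw [degIn_eq, Nat.mul_comm]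
        _ ≤ pathMul E r v := mul_deg_le hacyc hroot hu0v


end Aux

/-- If a finite rooted DAG `G` with root `r` has the `m`-path property
(i.e. `mul_G(v) ≤ m` for all vertices `v`), then `awt(G) ≤ amul(G) ≤ m · |V(G)|`. -/
theorem stmt1 {V : Type} [Fintype V] (E : V → V → Prop) (r : V)
    (hacyc : ∀ x : V, ¬ Relation.TransGen E x x)
    (hroot : ∀ x : V, Relation.ReflTransGen E r x)
    (m : ℕ) (hm : ∀ v : V, pathMul E r v ≤ m) :
    awt E r ≤ amul E r ∧ amul E r ≤ m * Fintype.card V := by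
  constructor
  · exact Finset.sum_le_sum fun v _ => wt_le_mul hacyc hroot v
  · calc amul E r ≤ ∑ _v : V, m := Finset.sum_le_sum fun v _ => hm v
      _ = m * Fintype.card V := by
          rw [Finset.sum_const, smul_eq_mul, Finset.card_univ, Nat.mul_comm]
end
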